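/- Let (K,v) be a nontrivially valued field of characteristic p > 0. If the perfect hull K^{1/p^∞} of K is not contained in the completion K^c of (K,v), then K admits infinitely many distinct Artin-Schreier extensions. -/

import Mathlib

open Polynomial

section AuxiliaryLemmas

variable {p : ℕ} [Fact p.Prime]

section PrimeField
variable {F : Type*} [Field F] [CharP F p]


/-- Fermat: `(m : F)^p = m` in characteristic `p`. -/
lemma natCast_pow_char (m : ℕ) : ((m : F)) ^ p = (m : F) := by
  haveI : ExpChar F p := ExpChar.prime (Fact.out)
  have := map_natCast (frobenius F p) m
  rwa [frobenius_def] at this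

/-- Any root of `X^p = X` in a field of characteristic `p` is a natural number cast `< p`. -/
lemma exists_natCast_eq_of_pow_char {s : F} (hs : s ^ p = s) : ∃ m : ℕ, m < p ∧ s = (m : F) := by
  classical
  have hp2 : 2 ≤ p := (Fact.out : p.Prime).two_le
  set Q : F[X] := X ^ p - X with hQ
  have hdegX : (X : F[X]).natDegree < (X ^ p : F[X]).natDegree := by
    simpa using lt_of_lt_of_le one_lt_two hp2
  have hQdeg : Q.natDegree = p := by
    rw [hQ, natDegree_sub_eq_left_of_natDegree_lt hdegX, natDegree_X_pow]
  have hQ0 : Q ≠ 0 := fun h => by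
    rw [h] at hQdeg; simp at hQdeg; omega
  have hroot : ∀ m : ℕ, m < p → IsRoot Q ((m : F)) := by
    intro m _
    simp [hQ, IsRoot, natCast_pow_char]
  have hroots : ∀ t : F, t ^ p = t → t ∈ Q.roots.toFinset := by
    intro t ht
    simp only [Multiset.mem_toFinset, mem_roots hQ0]
    simp [hQ, IsRoot, ht]
  set Fs : Finset F := (Finset.range p).image (fun m : ℕ => (m : F)) with hFs
  have hinj : Set.InjOn (fun m : ℕ => (m : F)) (Finset.range p) := by
    intro i hi j hj hij
    simp only [Finset.coe_range, Set.mem_Iio] at hi hj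
    have := (CharP.natCast_eq_natCast F p).1 hij
    exact (Nat.ModEq.eq_of_lt_of_lt this hi hj)
  have hcard : Fs.card = p := by
    rw [hFs, Finset.card_image_of_injOn hinj, Finset.card_range]
  have hsub : Fs ⊆ Q.roots.toFinset := by
    intro t ht
    rw [hFs] at ht
    obtain ⟨m, hm, rfl⟩ := Finset.mem_image.1 ht
    exact hroots _ (natCast_pow_char m)
  have hcard2 : Q.roots.toFinset.card ≤ Fs.card := by
    rw [hcard]
    calc Q.roots.toFinset.card ≤ Multiset.card Q.roots := Q.roots.toFinset_card_le
    _ ≤ Q.natDegree := Q.card_roots' 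
    _ = p := hQdeg
  have hEq : Fs = Q.roots.toFinset := Finset.eq_of_subset_of_card_le hsub hcard2
  have : s ∈ Q.roots.toFinset := hroots s hs
  rw [← hEq] at this
  obtain ⟨m, hm, hms⟩ := Finset.mem_image.1 this
  exact ⟨m, Finset.mem_range.1 hm, hms.symm⟩

omit [CharP F p] in
/-- The Artin-Schreier polynomial `X^p - X - C b` is monic of degree `p`. -/
lemma ASpoly_monic (b : F) : (X ^ p - X - C b : F[X]).Monic ∧ (X ^ p - X - C b : F[X]).natDegree = p := by
  have hp2 : 2 ≤ p := (Fact.out : p.Prime).two_le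
  have h1 : (X ^ p - X - C b : F[X]) = X ^ p - (X + C b) := by ring
  have hdeg : (X + C b : F[X]).degree < (X ^ p : F[X]).degree := by
    apply lt_of_le_of_lt (degree_add_le _ _)
    rw [degree_X_pow, degree_X]
    have hb := degree_C_le (a := b)
    have h2 : ((1:ℕ) : WithBot ℕ) < ((p:ℕ) : WithBot ℕ) := by
      exact_mod_cast lt_of_lt_of_le one_lt_two hp2
    refine max_lt h2 (lt_of_le_of_lt hb ?_)
    exact lt_of_le_of_lt (by norm_num) h2
  constructor
  · rw [h1]; exact (monic_X_pow p).sub_of_left hdeg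
  · rw [h1, natDegree_eq_of_degree_eq_some]
    rw [degree_sub_eq_left_of_degree_lt hdeg, degree_X_pow]

end PrimeField

section Main
variable {K Ω : Type*} [Field K] [Field Ω] [Algebra K Ω] [IsAlgClosure K Ω] [CharP K p]

variable {K Ω : Type*} [Field K] [Field Ω] [Algebra K Ω] [IsAlgClosure K Ω] [CharP K p]

lemma AS_isIntegral {θ : Ω} {b : K} (hb : θ ^ p - θ = algebraMap K Ω b) : IsIntegral K θ := by
  refine ⟨X ^ p - X - C b, (ASpoly_monic b).1, ?_⟩
  simp only [eval₂_sub, eval₂_X_pow, eval₂_X, eval₂_C]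
  rw [← hb]; ring

lemma AS_minpoly {θ : Ω} {b : K} (hθ : θ ∉ Set.range (algebraMap K Ω))
    (hb : θ ^ p - θ = algebraMap K Ω b) :
    minpoly K θ = X ^ p - X - C b ∧ (minpoly K θ).natDegree = p := by
  classical
  haveI : CharP Ω p := charP_of_injective_algebraMap (algebraMap K Ω).injective p
  have hp2 : 2 ≤ p := (Fact.out : p.Prime).two_le
  set P : K[X] := X ^ p - X - C b with hP
  obtain ⟨hPm, hPdeg⟩ := ASpoly_monic (p := p) b
  have hint : IsIntegral K θ := AS_isIntegral hb
  have haevalP : aeval θ P = 0 := by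
    simp only [hP, map_sub, aeval_X_pow, aeval_X, aeval_C]
    rw [← hb]; ring
  have hdvd : minpoly K θ ∣ P := minpoly.dvd K θ haevalP
  have hP0 : P ≠ 0 := hPm.ne_zero
  have hdle : (minpoly K θ).natDegree ≤ p := by
    exact (natDegree_le_of_dvd hdvd hP0).trans hPdeg.le
  -- the degree is exactly p
  have hdeg : (minpoly K θ).natDegree = p := by
    by_contra hne
    have hdlt : (minpoly K θ).natDegree < p := lt_of_le_of_ne hdle hne
    have hdpos : 0 < (minpoly K θ).natDegree := minpoly.natDegree_pos hint
    set m' : Polynomial Ω := (minpoly K θ).map (algebraMap K Ω) with hm'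
    have hm'mo : m'.Monic := (minpoly.monic hint).map _
    haveI : IsAlgClosed Ω := IsAlgClosure.isAlgClosed K
    have hm'spl : m'.Splits :=
      IsAlgClosed.splits _
    have hsum : m'.nextCoeff = -m'.roots.sum :=
      hm'spl.nextCoeff_eq_neg_sum_roots_of_monic hm'mo
    have hcardroots : Multiset.card m'.roots = m'.natDegree :=
      (splits_iff_card_roots).1 hm'spl
    have hm'deg : m'.natDegree = (minpoly K θ).natDegree :=
      natDegree_map_eq_of_injective (algebraMap K Ω).injective _
    -- each root differs from θ by an element of the prime field
    set S : Subring Ω := (algebraMap K Ω).range with hS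
    have hroots_form : ∀ r ∈ m'.roots, r - θ ∈ S := by
      intro r hr
      have hr0 : aeval r (minpoly K θ) = 0 := by
        have := (mem_roots (hm'mo.ne_zero)).1 hr
        rw [aeval_def, ← eval_map]
        exact this
      have hrootP : aeval r P = 0 := by
        obtain ⟨q, hq⟩ := hdvd
        rw [hq, map_mul, hr0, zero_mul]
      have hrP : r ^ p - r = algebraMap K Ω b := by
        have : r ^ p - r - algebraMap K Ω b = 0 := by
          simpa only [hP, map_sub, aeval_X_pow, aeval_X, aeval_C] using hrootP
        linear_combination this
      have hfix : (r - θ) ^ p = r - θ := by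
        rw [sub_pow_char]
        have h1 : r ^ p = r + algebraMap K Ω b := by linear_combination hrP
        have h2 : θ ^ p = θ + algebraMap K Ω b := by linear_combination hb
        rw [h1, h2]; ring
      obtain ⟨m, _, hm⟩ := exists_natCast_eq_of_pow_char hfix
      rw [hm]
      exact natCast_mem S m
    -- sum of roots computation
    have hsum2 : m'.roots.sum = (m'.roots.map (fun r => r - θ)).sum
        + (Multiset.card m'.roots) • θ := by
      have : m'.roots.map (fun r => (r - θ) + θ) = m'.roots.map id := by
        apply Multiset.map_congr rfl
        intro r _; simp
      calc m'.roots.sum = (m'.roots.map id).sum := by rw [Multiset.map_id]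
      _ = (m'.roots.map (fun r => (r - θ) + θ)).sum := by rw [this]
      _ = (m'.roots.map (fun r => r - θ)).sum + (m'.roots.map (fun _ => θ)).sum := by
          rw [Multiset.sum_map_add]
      _ = (m'.roots.map (fun r => r - θ)).sum + (Multiset.card m'.roots) • θ := by
          rw [Multiset.map_const', Multiset.sum_replicate]
    have hTsum : (m'.roots.map (fun r => r - θ)).sum ∈ S := by
      apply multiset_sum_mem
      intro t ht
      obtain ⟨r, hr, rfl⟩ := Multiset.mem_map.1 ht
      exact hroots_form r hr
    have hnext : m'.nextCoeff ∈ S := by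
      rw [hm', nextCoeff_map (algebraMap K Ω).injective]
      exact ⟨_, rfl⟩
    have hcardθ : (Multiset.card m'.roots) • θ ∈ S := by
      have : (Multiset.card m'.roots) • θ = m'.roots.sum - (m'.roots.map (fun r => r - θ)).sum := by
        rw [hsum2]; ring
      rw [this]
      have hsummem : m'.roots.sum ∈ S := by
        have : m'.roots.sum = -m'.nextCoeff := by rw [hsum]; ring
        rw [this]; exact neg_mem hnext
      exact sub_mem hsummem hTsum
    -- derive θ ∈ range
    set d : ℕ := (minpoly K θ).natDegree with hd
    have hcard' : Multiset.card m'.roots = d := by rw [hcardroots, hm'deg]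
    rw [hcard'] at hcardθ
    have hdcast : ((d : Ω)) ≠ 0 := by
      rw [Ne, CharP.cast_eq_zero_iff Ω p d]
      exact Nat.not_dvd_of_pos_of_lt hdpos hdlt
    obtain ⟨w, hw⟩ := hcardθ
    apply hθ
    refine ⟨(d : K)⁻¹ * w, ?_⟩
    have hdK : algebraMap K Ω ((d : K)) = (d : Ω) := by
      simp
    rw [map_mul, map_inv₀, hdK]
    rw [hw]
    rw [nsmul_eq_mul]
    exact inv_mul_cancel_left₀ hdcast θ
  refine ⟨?_, hdeg⟩
  -- minpoly = P since monic divisor of monic of same degree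
  obtain ⟨q, hq⟩ := hdvd
  have hq0 : q ≠ 0 := by
    intro h; rw [h, mul_zero] at hq; exact hP0 hq
  have hdegq : q.natDegree = 0 := by
    have := natDegree_mul (minpoly.ne_zero hint) hq0
    rw [← hq, hPdeg, hdeg] at this
    omega
  have hqC : q = C (q.coeff 0) := eq_C_of_natDegree_eq_zero hdegq
  have hlead : q.coeff 0 = 1 := by
    have h1 : P.leadingCoeff = 1 := hPm
    have h2 : (minpoly K θ).leadingCoeff = 1 := minpoly.monic hint
    rw [hq, leadingCoeff_mul, h2, one_mul] at h1
    rwa [hqC, leadingCoeff_C] at h1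
  rw [hq, hqC, hlead, map_one, mul_one]



variable {Γ : Type*} [LinearOrderedCommGroupWithZero Γ] (v : Valuation Ω Γ)

variable (K) in
/-- `x` is "far" from (the image of) `K`: its distance to `K` is bounded below by the
valuation of a nonzero element of `K`; equivalently `x` does not lie in the completion. -/
def IsFar (x : Ω) : Prop :=
  ∃ b : K, b ≠ 0 ∧ ∀ c : K, v (algebraMap K Ω b) ≤ v (x - algebraMap K Ω c)

lemma IsFar.not_mem {x : Ω} (h : IsFar K v x) : x ∉ Set.range (algebraMap K Ω) := by
  rintro ⟨c, rfl⟩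
  obtain ⟨b, hb0, hb⟩ := h
  have := hb c
  simp only [sub_self] at this
  rw [v.map_zero, le_zero_iff] at this
  exact hb0 (by simpa using (v.zero_iff).1 this)

lemma IsFar.reduce : ∀ (n : ℕ) (x : Ω), IsFar K v x → x ^ p ^ n ∈ Set.range (algebraMap K Ω) →
    ∃ w : Ω, IsFar K v w ∧ w ^ p ∈ Set.range (algebraMap K Ω) := by
  haveI : CharP Ω p := charP_of_injective_algebraMap (algebraMap K Ω).injective p
  haveI : IsAlgClosed Ω := IsAlgClosure.isAlgClosed K
  have hppos : 0 < p := (Fact.out : p.Prime).pos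
  intro n
  induction n with
  | zero =>
    intro x hfar hmem
    exact absurd (by simpa using hmem) (hfar.not_mem)
  | succ n ih =>
    intro x hfar hmem
    by_cases hf : IsFar K v (x ^ p)
    · refine ih (x ^ p) hf ?_
      rwa [← pow_mul, ← pow_succ']
    · obtain ⟨b, hb0, hb⟩ := hfar
      rw [IsFar, not_exists] at hf
      have := hf (b ^ p)
      push_neg at this
      obtain ⟨c, hc⟩ := this (pow_ne_zero p hb0)
      obtain ⟨w, hw⟩ := IsAlgClosed.exists_pow_nat_eq (algebraMap K Ω c) hppos
      refine ⟨w, ⟨b, hb0, ?_⟩, ⟨c, hw.symm⟩⟩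
      intro g
      have key : (w - algebraMap K Ω g) ^ p
          = (algebraMap K Ω c - x ^ p) + (x ^ p - algebraMap K Ω (g ^ p)) := by
        rw [sub_pow_char, hw, map_pow]
        ring
      have h2 : v (algebraMap K Ω b) ^ p ≤ v (x ^ p - algebraMap K Ω (g ^ p)) := by
        have : x ^ p - algebraMap K Ω (g ^ p) = (x - algebraMap K Ω g) ^ p := by
          rw [sub_pow_char, map_pow]
        rw [this, map_pow]
        exact pow_le_pow_left₀ zero_le' (hb g) p
      have h3 : v (algebraMap K Ω c - x ^ p) < v (algebraMap K Ω b) ^ p := by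
        rw [v.map_sub_swap]
        calc v (x ^ p - algebraMap K Ω c) < v (algebraMap K Ω (b ^ p)) := hc
        _ = v (algebraMap K Ω b) ^ p := by rw [map_pow, map_pow]
      have h4 : v ((w - algebraMap K Ω g) ^ p) = v (x ^ p - algebraMap K Ω (g ^ p)) := by
        rw [key]
        exact v.map_add_eq_of_lt_right (lt_of_lt_of_le h3 h2)
      have h4' : v (w - algebraMap K Ω g) ^ p = v (x ^ p - algebraMap K Ω (g ^ p)) := by
        rw [← v.map_pow]; exact h4
      have h5 : v (algebraMap K Ω b) ^ p ≤ v (w - algebraMap K Ω g) ^ p := by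
        rw [h4']; exact h2
      exact le_of_pow_le_pow_left₀ hppos.ne' zero_le' h5


/-- The key valuation-theoretic lemma: if `z` is far from `K` (with bound `b₀`) and
`z^p = a ∈ K`, then for a suitable threshold `D`, no element `a f^p` with `v f ≥ v D`
lies in the image of the Artin-Schreier map `c ↦ c^p - c`. -/
lemma core_lemma {z : Ω} {b₀ : K} (hb₀ : b₀ ≠ 0)
    (hz : ∀ c : K, v (algebraMap K Ω b₀) ≤ v (z - algebraMap K Ω c)) {a : K}
    (ha : algebraMap K Ω a = z ^ p) {D : K}
    (hD2 : 1 < v (algebraMap K Ω D) * v z)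
    (hD3 : v z < v (algebraMap K Ω D) ^ (p - 1) * v (algebraMap K Ω b₀) ^ p)
    {f : K} (hf : v (algebraMap K Ω D) ≤ v (algebraMap K Ω f)) (c : K) :
    c ^ p - c ≠ a * f ^ p := by
  haveI : CharP Ω p := charP_of_injective_algebraMap (algebraMap K Ω).injective p
  have hp1 : 1 < p := (Fact.out : p.Prime).one_lt
  intro hEq
  set β : Γ := v (algebraMap K Ω b₀) with hβ
  have hβ0 : β ≠ 0 := by
    simp only [hβ, Ne, Valuation.zero_iff, _root_.map_eq_zero]; exact hb₀
  have hD0 : v (algebraMap K Ω D) ≠ 0 := by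
    intro h; rw [h, zero_mul] at hD2; exact (not_lt_of_ge zero_le') hD2
  have hf0v : v (algebraMap K Ω f) ≠ 0 :=
    fun h => hD0 (le_antisymm (h ▸ hf) zero_le')
  have hfK : f ≠ 0 := by
    intro h; apply hf0v; rw [h, map_zero, map_zero]
  have hz0 : v z ≠ 0 := by
    intro h; rw [h, mul_zero] at hD2; exact (not_lt_of_ge zero_le') hD2
  set y : Ω := z * algebraMap K Ω f with hy
  have hyp : y ^ p = algebraMap K Ω c ^ p - algebraMap K Ω c := by
    have : y ^ p = algebraMap K Ω (a * f ^ p) := by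
      rw [hy, mul_pow, map_mul, ha, map_pow]
    rw [this, ← hEq, map_sub, map_pow]
  set s : Ω := y - algebraMap K Ω c with hs
  have hsp : s ^ p = - algebraMap K Ω c := by
    rw [hs, sub_pow_char, hyp]; ring
  have hslb : β * v (algebraMap K Ω f) ≤ v s := by
    have hfΩ : (algebraMap K Ω f) ≠ 0 := by
      rw [Ne, _root_.map_eq_zero]; exact hfK
    have hfac : s = algebraMap K Ω f * (z - algebraMap K Ω (c * f⁻¹)) := by
      rw [hs, hy, map_mul, map_inv₀, mul_sub, mul_comm (algebraMap K Ω c), ← mul_assoc,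
        mul_inv_cancel₀ hfΩ, one_mul, mul_comm z]
    rw [hfac, v.map_mul, mul_comm β]
    exact mul_le_mul_right (hz (c * f⁻¹)) _
  have hyv : 1 < v y := by
    rw [hy, v.map_mul]
    calc 1 < v (algebraMap K Ω D) * v z := hD2
    _ ≤ v (algebraMap K Ω f) * v z := mul_le_mul_left hf _
    _ = v z * v (algebraMap K Ω f) := mul_comm _ _
  have hvc : v (algebraMap K Ω c) = v s ^ p := by
    rw [← v.map_neg, ← hsp, v.map_pow]
  have hs1 : 1 < v s := by
    by_contra h
    push_neg at h
    have h1 : v (algebraMap K Ω c) ≤ 1 := by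
      rw [hvc]; exact pow_le_one₀ zero_le' h
    have h2 : v y ≤ 1 := by
      have : y = s + algebraMap K Ω c := by rw [hs]; ring
      rw [this]
      exact le_trans (v.map_add _ _) (max_le h h1)
    exact absurd hyv (not_lt_of_ge h2)
  have hsppow : v s < v s ^ p := by
    conv_lhs => rw [← pow_one (v s)]
    exact pow_lt_pow_right₀ hs1 hp1
  have hyc : v y = v s ^ p := by
    have : y = s + algebraMap K Ω c := by rw [hs]; ring
    rw [this, v.map_add_eq_of_lt_right (by rw [hvc]; exact hsppow), hvc]
  -- main chain
  have hchain : v z * v (algebraMap K Ω f) = v s ^ p := by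
    rw [← hyc, hy, v.map_mul]
  have hge : (β ^ p * v (algebraMap K Ω f) ^ (p - 1)) * v (algebraMap K Ω f)
      ≤ v z * v (algebraMap K Ω f) := by
    rw [hchain]
    calc (β ^ p * v (algebraMap K Ω f) ^ (p - 1)) * v (algebraMap K Ω f)
        = β ^ p * v (algebraMap K Ω f) ^ p := by
          rw [mul_assoc, ← pow_succ]
          congr 2
          omega
    _ = (β * v (algebraMap K Ω f)) ^ p := by rw [mul_pow]
    _ ≤ v s ^ p := pow_le_pow_left₀ zero_le' hslb p
  have hcancel : β ^ p * v (algebraMap K Ω f) ^ (p - 1) ≤ v z :=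
    le_of_mul_le_mul_right hge (zero_lt_iff.2 hf0v)
  have hfinal : v z < v z := by
    calc v z < v (algebraMap K Ω D) ^ (p - 1) * β ^ p := hD3
    _ ≤ v (algebraMap K Ω f) ^ (p - 1) * β ^ p :=
        mul_le_mul_left (pow_le_pow_left₀ zero_le' hf (p - 1)) _
    _ = β ^ p * v (algebraMap K Ω f) ^ (p - 1) := mul_comm _ _
    _ ≤ v z := hcancel
  exact lt_irrefl _ hfinal

/-- Existence of the threshold element `D`. -/
lemma exists_goodD {u : K} (hu : 1 < v (algebraMap K Ω u)) {z : Ω} (hz0 : v z ≠ 0)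
    {a : K} (ha : algebraMap K Ω a = z ^ p) {b₀ : K} (hb₀ : b₀ ≠ 0) :
    ∃ D : K, 1 < v (algebraMap K Ω D) ∧ 1 < v (algebraMap K Ω D) * v z ∧
      v z < v (algebraMap K Ω D) ^ (p - 1) * v (algebraMap K Ω b₀) ^ p := by
  have hp1 : 1 < p := (Fact.out : p.Prime).one_lt
  have hppos : 0 < p := lt_trans one_pos hp1
  set β : Γ := v (algebraMap K Ω b₀) with hβ
  have hβ0 : β ≠ 0 := by
    simp only [hβ, Ne, Valuation.zero_iff, _root_.map_eq_zero]; exact hb₀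
  have haz : a ≠ 0 := by
    intro h
    rw [h, map_zero] at ha
    apply hz0
    have : v (z ^ p) = 0 := by rw [← ha, v.map_zero]
    rw [v.map_pow] at this
    exact pow_eq_zero_iff hppos.ne' |>.1 this
  have hva : v (algebraMap K Ω a) = v z ^ p := by rw [ha, v.map_pow]
  -- two quantities to dominate
  set g₁ : K := a⁻¹ with hg₁
  set g₂ : K := a * (b₀ ^ (p * p))⁻¹ with hg₂
  set γ : Γ := max (v (algebraMap K Ω g₁)) (v (algebraMap K Ω g₂)) with hγ
  have hγ_realized : ∃ g : K, v (algebraMap K Ω g) = γ := by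
    rcases le_total (v (algebraMap K Ω g₁)) (v (algebraMap K Ω g₂)) with h | h
    · exact ⟨g₂, (max_eq_right h).symm⟩
    · exact ⟨g₁, (max_eq_left h).symm⟩
  obtain ⟨g, hg⟩ := hγ_realized
  -- construct D with 1 < v D and γ < (v D)^p
  have hD : ∃ D : K, 1 < v (algebraMap K Ω D) ∧ γ < v (algebraMap K Ω D) ^ p := by
    by_cases hγ1 : γ ≤ 1
    · exact ⟨u, hu, lt_of_le_of_lt hγ1 (one_lt_pow₀ hu hppos.ne')⟩
    · push_neg at hγ1
      have hvgu : v (algebraMap K Ω (g * u)) = γ * v (algebraMap K Ω u) := by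
        rw [map_mul, v.map_mul, hg]
      have hgt : γ < v (algebraMap K Ω (g * u)) := by
        rw [hvgu]
        calc γ = γ * 1 := (mul_one γ).symm
        _ < γ * v (algebraMap K Ω u) := mul_lt_mul_of_pos_left hu (lt_trans one_pos hγ1)
      have h1' : 1 < v (algebraMap K Ω (g * u)) := lt_trans hγ1 hgt
      exact ⟨g * u, h1', lt_of_lt_of_le hgt (le_self_pow₀ h1'.le hppos.ne')⟩
  obtain ⟨D, hD1, hDγ⟩ := hD
  refine ⟨D, hD1, ?_, ?_⟩
  · -- 1 < v D * v z
    have h1 : v (algebraMap K Ω g₁) ≤ γ := le_max_left _ _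
    have h2 : (v z)⁻¹ ^ p < v (algebraMap K Ω D) ^ p := by
      apply lt_of_le_of_lt _ hDγ
      apply le_trans _ h1
      rw [hg₁, map_inv₀, map_inv₀, hva, ← inv_pow]
    have h3 : (v z)⁻¹ < v (algebraMap K Ω D) := lt_of_pow_lt_pow_left₀ p zero_le' h2
    calc (1 : Γ) = (v z)⁻¹ * v z := (inv_mul_cancel₀ hz0).symm
    _ < v (algebraMap K Ω D) * v z := mul_lt_mul_of_pos_right h3 (zero_lt_iff.2 hz0)
  · -- v z < v D ^ (p-1) * β ^ p
    have h1 : v (algebraMap K Ω g₂) ≤ γ := le_max_right _ _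
    have h2 : v (algebraMap K Ω g₂) = v z ^ p * (β ^ (p * p))⁻¹ := by
      rw [hg₂, map_mul, map_inv₀, v.map_mul, map_inv₀, hva, map_pow, v.map_pow, hβ]
    apply lt_of_pow_lt_pow_left₀ p zero_le'
    have e1 : (v (algebraMap K Ω D) ^ (p - 1) * β ^ p) ^ p
        = v (algebraMap K Ω D) ^ ((p - 1) * p) * β ^ (p * p) := by
      rw [mul_pow, ← pow_mul, ← pow_mul]
    rw [e1]
    have e2 : v (algebraMap K Ω D) ^ p ≤ v (algebraMap K Ω D) ^ ((p - 1) * p) :=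
      pow_le_pow_right₀ hD1.le (by calc p = 1 * p := (one_mul p).symm
        _ ≤ (p - 1) * p := Nat.mul_le_mul_right p (by omega))
    have e3 : v z ^ p = (v z ^ p * (β ^ (p * p))⁻¹) * β ^ (p * p) := by
      rw [mul_assoc, inv_mul_cancel₀ (pow_ne_zero _ hβ0), mul_one]
    rw [e3]
    calc (v z ^ p * (β ^ (p * p))⁻¹) * β ^ (p * p)
        < v (algebraMap K Ω D) ^ p * β ^ (p * p) := by
          apply mul_lt_mul_of_pos_right _ (zero_lt_iff.2 (pow_ne_zero _ hβ0))
          rw [← h2]; exact lt_of_le_of_lt h1 hDγ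
    _ ≤ v (algebraMap K Ω D) ^ ((p - 1) * p) * β ^ (p * p) := mul_le_mul_left e2 _


end Main

end AuxiliaryLemmas



/-- An Artin-Schreier extension of `K` inside a fixed algebraic closure `Ω`: an
intermediate field generated over `K` by a root `θ ∉ K` of a polynomial `X^p − X − b`
with `b ∈ K` (such an extension is Galois of degree `p`). -/
def IsArtinSchreierExtension (K Ω : Type*) [Field K] [Field Ω] [Algebra K Ω] (p : ℕ)
    (E : IntermediateField K Ω) : Prop :=
  ∃ θ : Ω, E = IntermediateField.adjoin K {θ} ∧ θ ∉ Set.range (algebraMap K Ω) ∧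
    θ ^ p - θ ∈ Set.range (algebraMap K Ω)

/-- Let `(K,v)` be a nontrivially valued field of characteristic
`p > 0`.  If the perfect hull `K^{1/p^∞}` of `K` is not contained in the completion
`K^c` of `(K,v)`, then `K` admits infinitely many distinct Artin-Schreier extensions
(inside a fixed algebraic closure `Ω` of `K`).

`Ω` carries an extension `v` of the valuation; an element `x` of the perfect hull
(i.e. `x^{p^n} ∈ K` for some `n`) fails to lie in the completion `K^c` precisely when
`v(x−K)` is bounded above (additively) by an element of `vK`, which in the
multiplicative notation (order reversed) reads: `∃ b ∈ K \ {0}, ∀ c ∈ K, v b ≤ v (x − c)`. -/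
theorem statement18 {K Ω : Type*} [Field K] [Field Ω] [Algebra K Ω] [IsAlgClosure K Ω]
    {Γ : Type*} [LinearOrderedCommGroupWithZero Γ] (v : Valuation Ω Γ)
    (p : ℕ) [Fact p.Prime] [CharP K p]
    (hnontriv : ∃ x : K, x ≠ 0 ∧ v (algebraMap K Ω x) ≠ 1)
    (hx : ∃ x : Ω, (∃ n : ℕ, x ^ p ^ n ∈ Set.range (algebraMap K Ω)) ∧
      ∃ b : K, b ≠ 0 ∧ ∀ c : K, v (algebraMap K Ω b) ≤ v (x - algebraMap K Ω c)) :
    {E : IntermediateField K Ω | IsArtinSchreierExtension K Ω p E}.Infinite := by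
  classical
  haveI : CharP Ω p := charP_of_injective_algebraMap (algebraMap K Ω).injective p
  haveI : IsAlgClosed Ω := IsAlgClosure.isAlgClosed K
  have hp1 : 1 < p := (Fact.out : p.Prime).one_lt
  have hppos : 0 < p := lt_trans one_pos hp1
  -- an element of value > 1
  obtain ⟨t, ht0, htv⟩ := hnontriv
  have htv0 : v (algebraMap K Ω t) ≠ 0 := by
    simp only [Ne, Valuation.zero_iff, _root_.map_eq_zero]; exact ht0
  have hu : ∃ u : K, 1 < v (algebraMap K Ω u) := by
    rcases lt_or_gt_of_ne htv with h | h
    · refine ⟨t⁻¹, ?_⟩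
      rw [map_inv₀, map_inv₀]
      exact (one_lt_inv₀ (zero_lt_iff.2 htv0)).2 h
    · exact ⟨t, h⟩
  obtain ⟨u, hu1⟩ := hu
  -- reduce to an element z far from K with z^p ∈ K
  obtain ⟨x, ⟨n, hxn⟩, hxfar⟩ := hx
  obtain ⟨z, hzfar, ⟨a, ha⟩⟩ := IsFar.reduce v n x hxfar hxn
  obtain ⟨b₀, hb₀0, hb₀⟩ := hzfar
  have hβ0 : v (algebraMap K Ω b₀) ≠ 0 := by
    simp only [Ne, Valuation.zero_iff, _root_.map_eq_zero]; exact hb₀0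
  have hz0 : v z ≠ 0 := by
    intro h
    have h2 := hb₀ 0
    rw [map_zero, sub_zero, h, le_zero_iff] at h2
    exact hβ0 h2
  obtain ⟨D, hD1, hD2, hD3⟩ := exists_goodD v hu1 hz0 ha hb₀0
  have hD0 : v (algebraMap K Ω D) ≠ 0 := fun h => by rw [h] at hD1; exact absurd hD1 (by simp)
  -- the family of Artin-Schreier generators
  set d : ℕ → K := fun k => D * u ^ k with hd
  set bb : ℕ → K := fun k => a * (d k) ^ p with hbb
  have hvd : ∀ k, v (algebraMap K Ω (d k))
      = v (algebraMap K Ω D) * v (algebraMap K Ω u) ^ k := by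
    intro k
    rw [hd]
    simp only [map_mul, map_pow, v.map_mul, v.map_pow]
  have hvdD : ∀ k, v (algebraMap K Ω D) ≤ v (algebraMap K Ω (d k)) := by
    intro k
    rw [hvd]
    calc v (algebraMap K Ω D) = v (algebraMap K Ω D) * 1 := (mul_one _).symm
    _ ≤ v (algebraMap K Ω D) * v (algebraMap K Ω u) ^ k :=
        mul_le_mul_right (one_le_pow₀ hu1.le) _
  -- roots of the Artin-Schreier polynomials
  have hθex : ∀ k : ℕ, ∃ θ : Ω, θ ^ p - θ = algebraMap K Ω (bb k) := by
    intro k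
    obtain ⟨Pm, Pdeg⟩ := ASpoly_monic (p := p) (algebraMap K Ω (bb k))
    have hdne : (X ^ p - X - C (algebraMap K Ω (bb k)) : Polynomial Ω).degree ≠ 0 := by
      rw [degree_eq_natDegree Pm.ne_zero, Pdeg]
      exact_mod_cast hppos.ne'
    obtain ⟨θ, hθ⟩ := IsAlgClosed.exists_root _ hdne
    refine ⟨θ, ?_⟩
    have h3 : θ ^ p - θ - algebraMap K Ω (bb k) = 0 := by
      simpa [IsRoot, eval_sub, eval_pow] using hθ
    linear_combination h3
  choose θ hθ using hθex
  have hθnotmem : ∀ k, θ k ∉ Set.range (algebraMap K Ω) := by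
    rintro k ⟨c, hc⟩
    apply core_lemma v hb₀0 hb₀ ha hD2 hD3 (hvdD k) c
    have h1 : algebraMap K Ω (c ^ p - c) = algebraMap K Ω (bb k) := by
      rw [map_sub, map_pow, hc]
      exact hθ k
    have h2 := (algebraMap K Ω).injective h1
    rwa [hbb] at h2
  set Efam : ℕ → IntermediateField K Ω := fun k => IntermediateField.adjoin K {θ k} with hEfam
  have hmem : ∀ k, Efam k ∈ {E : IntermediateField K Ω | IsArtinSchreierExtension K Ω p E} :=
    fun k => ⟨θ k, by rw [hEfam], hθnotmem k, ⟨bb k, (hθ k).symm⟩⟩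
  have hinj : Function.Injective Efam := by
    intro k l hkl
    by_contra hne
    -- setup: automorphism moving θ k
    have hminθk := AS_minpoly (hθnotmem k) (hθ k)
    have hintk : IsIntegral K (θ k) := AS_isIntegral (hθ k)
    have hK' : ∀ s : Ω, IsIntegral K s ∧ ((minpoly K s).map (algebraMap K Ω)).Splits := by
      intro s
      have halg : Algebra.IsAlgebraic K Ω := IsAlgClosure.isAlgebraic
      exact ⟨((halg.isAlgebraic s).isIntegral), IsAlgClosed.splits _⟩
    have haev : aeval (θ k + 1) (minpoly K (θ k)) = 0 := by
      rw [hminθk.1]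
      have hchar1 : (θ k + 1) ^ p = θ k ^ p + 1 := by
        have h := add_pow_char (θ k) (1 : Ω) (p := p)
        rwa [one_pow] at h
      simp only [map_sub, aeval_X_pow, aeval_X, aeval_C]
      rw [hchar1, ← hθ k]; ring
    obtain ⟨σ, hσ⟩ := IntermediateField.exists_algHom_of_splits_of_aeval hK' haev
    have hθlk : θ l ∈ Efam k := by
      rw [hkl]
      exact IntermediateField.mem_adjoin_simple_self K (θ l)
    have hσθlfix : (σ (θ l) - θ l) ^ p = σ (θ l) - θ l := by
      have h1 : σ (θ l) ^ p - σ (θ l) = algebraMap K Ω (bb l) := by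
        rw [← map_pow, ← map_sub, hθ l, AlgHom.commutes]
      rw [sub_pow_char]
      linear_combination h1 - hθ l
    obtain ⟨m, hmlt, hm⟩ := exists_natCast_eq_of_pow_char hσθlfix
    set η : Ω := θ l - (m : Ω) * θ k with hη
    have hσsay : σ (θ l) = θ l + (m : Ω) := by linear_combination hm
    have hσfix : σ η = η := by
      rw [hη, map_sub, map_mul, map_natCast, hσ, hσsay]; ring
    have hηAS : η ^ p - η = algebraMap K Ω (bb l - (m : K) * bb k) := by
      rw [hη, sub_pow_char, mul_pow, natCast_pow_char, map_sub,
        show (algebraMap K Ω) ((m : K) * bb k) = (m : Ω) * algebraMap K Ω (bb k) by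
          rw [map_mul, map_natCast]]
      linear_combination (hθ l) - (m : Ω) * (hθ k)
    by_cases hηmem : η ∈ Set.range (algebraMap K Ω)
    · -- η = algebraMap c leads to a forbidden Artin-Schreier equation
      obtain ⟨c, hc⟩ := hηmem
      have hceq : c ^ p - c = bb l - (m : K) * bb k := by
        apply (algebraMap K Ω).injective
        rw [map_sub, map_pow, hc, ← hηAS]
      set f : K := d l - (m : K) * d k with hf
      have hmK : ((m : K)) ^ p = (m : K) := natCast_pow_char m
      have hfeq : bb l - (m : K) * bb k = a * f ^ p := by
        show a * d l ^ p - (m : K) * (a * d k ^ p) = a * f ^ p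
        rw [hf, sub_pow_char, show ((m : K) * d k) ^ p = (m : K) * d k ^ p by
          rw [mul_pow, hmK]]
        ring
      have hvf : v (algebraMap K Ω D) ≤ v (algebraMap K Ω f) := by
        by_cases hm0 : m = 0
        · have : f = d l := by rw [hf, hm0]; simp
          rw [this]; exact hvdD l
        · have hmΩ0 : ((m : Ω)) ≠ 0 := by
            rw [Ne, CharP.cast_eq_zero_iff Ω p m]
            exact Nat.not_dvd_of_pos_of_lt (Nat.pos_of_ne_zero hm0) hmlt
          have hvm0 : v ((m : Ω)) ≠ 0 := by
            simp only [Ne, Valuation.zero_iff]; exact hmΩ0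
          have hvm : v ((m : Ω)) = 1 := by
            have h1 : v ((m : Ω)) ^ p = v ((m : Ω)) := by
              rw [← v.map_pow, natCast_pow_char]
            rcases lt_trichotomy (v ((m : Ω))) 1 with h | h | h
            · exfalso
              have := pow_lt_pow_right_of_lt_one₀ (zero_lt_iff.2 hvm0) h hp1
              rw [pow_one, h1] at this
              exact lt_irrefl _ this
            · exact h
            · exfalso
              have h2 := pow_lt_pow_right₀ h hp1
              rw [pow_one, h1] at h2
              exact lt_irrefl _ h2
          have hB : v (algebraMap K Ω ((m : K) * d k))
              = v (algebraMap K Ω D) * v (algebraMap K Ω u) ^ k := by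
            rw [map_mul, v.map_mul, map_natCast, hvm, one_mul, hvd]
          have hne' : v (algebraMap K Ω ((m : K) * d k)) ≠ v (algebraMap K Ω (d l)) := by
            rw [hB, hvd]
            intro hEq'
            have h3 : v (algebraMap K Ω u) ^ k = v (algebraMap K Ω u) ^ l :=
              mul_left_cancel₀ hD0 hEq'
            exact hne ((pow_right_strictMono₀ hu1).injective h3)
          have hmax : v (algebraMap K Ω f) = max (v (algebraMap K Ω (d l)))
              (v (algebraMap K Ω ((m : K) * d k))) := by
            rw [hf, map_sub, sub_eq_add_neg]
            rw [show v (algebraMap K Ω (d l) + -algebraMap K Ω ((m : K) * d k))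
                = max (v (algebraMap K Ω (d l))) (v (-algebraMap K Ω ((m : K) * d k)))
              from v.map_add_of_distinct_val (by rw [v.map_neg]; exact hne'.symm), v.map_neg]
          rw [hmax]
          exact le_trans (hvdD l) (le_max_left _ _)
      exact core_lemma v hb₀0 hb₀ ha hD2 hD3 hvf c (hceq.trans hfeq)
    · -- η generates the same degree-p extension and is fixed by σ
      have hminη := AS_minpoly hηmem hηAS
      have hintη : IsIntegral K η := AS_isIntegral hηAS
      have hηEk : η ∈ Efam k := by
        rw [hη]
        exact sub_mem hθlk (mul_mem (natCast_mem (Efam k) m)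
          (IntermediateField.mem_adjoin_simple_self K (θ k)))
      have hle : IntermediateField.adjoin K {η} ≤ Efam k := by
        rw [IntermediateField.adjoin_le_iff]
        exact Set.singleton_subset_iff.2 hηEk
      haveI : FiniteDimensional K (Efam k) := by
        rw [hEfam]
        exact IntermediateField.adjoin.finiteDimensional hintk
      have hfr1 : Module.finrank K (IntermediateField.adjoin K {η}) = p := by
        rw [IntermediateField.adjoin.finrank hintη, hminη.2]
      have hfr2 : Module.finrank K (Efam k) = p := by
        rw [hEfam]
        rw [IntermediateField.adjoin.finrank hintk, hminθk.2]
      have hEq2 : IntermediateField.adjoin K {η} = Efam k :=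
        IntermediateField.eq_of_le_of_finrank_le hle (by rw [hfr1, hfr2])
      have hfix : ∀ x ∈ IntermediateField.adjoin K {η}, σ x = x := by
        intro x hxmem
        induction hxmem using IntermediateField.adjoin_induction with
        | mem y hy =>
          rw [Set.mem_singleton_iff] at hy
          rw [hy]; exact hσfix
        | algebraMap y => exact σ.commutes y
        | add y₁ y₂ hy₁ hy₂ h1 h2 => rw [map_add, h1, h2]
        | inv y₁ hy₁ h1 => rw [map_inv₀, h1]
        | mul y₁ y₂ hy₁ hy₂ h1 h2 => rw [map_mul, h1, h2]
      have hθkmem : θ k ∈ IntermediateField.adjoin K {η} := by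
        rw [hEq2, hEfam]
        exact IntermediateField.mem_adjoin_simple_self K (θ k)
      have h5 := hfix (θ k) hθkmem
      rw [hσ] at h5
      exact (one_ne_zero : (1 : Ω) ≠ 0) (by linear_combination h5)
  exact Set.infinite_of_injective_forall_mem hinj hmem
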